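/- Let B ∈ R^{ℓ×ℓ} be symmetric positive semidefinite with eigenvalues λ_1,…,λ_ℓ, let u ∈ R satisfy u > λ_i for all i, and let δ > 0. Define φ̄(x) = Σ_{i=1}^ℓ 1/(x − λ_i) for x > λ_1. Then φ̄(u) − φ̄(u+δ) > 0 and Tr(((u+δ)I_ℓ − B)⁻²) / (φ̄(u) − φ̄(u+δ)) + φ̄(u+δ) ≤ 1/δ + φ̄(u). -/

import Mathlib

open Matrix MeasureTheory

noncomputable def frobSq {m n : Type*} [Fintype m] [Fintype n] (A : Matrix m n ℝ) : ℝ :=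
  ∑ i, ∑ j, A i j ^ 2

noncomputable def spec {m n : Type*} [Fintype m] [Fintype n] [DecidableEq n]
    (A : Matrix m n ℝ) : ℝ :=
  ‖LinearMap.toContinuousLinearMap (Matrix.toEuclideanLin A)‖

noncomputable def specErr {m n : Type*} [Fintype m] [Fintype n] [DecidableEq n]
    (A : Matrix m n ℝ) (k : ℕ) : ℝ :=
  sInf {e : ℝ | ∃ X : Matrix m n ℝ, X.rank ≤ k ∧ e = spec (A - X)}

noncomputable def frobSqErr {m n : Type*} [Fintype m] [Fintype n]
    (A : Matrix m n ℝ) (k : ℕ) : ℝ :=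
  sInf {e : ℝ | ∃ X : Matrix m n ℝ, X.rank ≤ k ∧ e = frobSq (A - X)}

noncomputable def specErrIn {m n r : Type*} [Fintype m] [Fintype n] [DecidableEq n]
    [Fintype r] (A : Matrix m n ℝ) (C : Matrix m r ℝ) (k : ℕ) : ℝ :=
  sInf {e : ℝ | ∃ X : Matrix m n ℝ, X.rank ≤ k ∧
    LinearMap.range X.mulVecLin ≤ LinearMap.range C.mulVecLin ∧ e = spec (A - X)}

noncomputable def frobSqErrIn {m n r : Type*} [Fintype m] [Fintype n] [Fintype r]
    (A : Matrix m n ℝ) (C : Matrix m r ℝ) (k : ℕ) : ℝ :=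
  sInf {e : ℝ | ∃ X : Matrix m n ℝ, X.rank ≤ k ∧
    LinearMap.range X.mulVecLin ≤ LinearMap.range C.mulVecLin ∧ e = frobSq (A - X)}

def IsMoorePenrose {m n : Type*} [Fintype m] [Fintype n]
    (M : Matrix m n ℝ) (P : Matrix n m ℝ) : Prop :=
  M * P * M = M ∧ P * M * P = P ∧ (M * P)ᵀ = M * P ∧ (P * M)ᵀ = P * M

/-- **Upper-barrier potential inequality** (part of Lemma 7.6 of
Boutsidis–Drineas–Magdon-Ismail, after Batson–Spielman–Srivastava): for a symmetric
positive semidefinite `B` with eigenvalues `λ₁, …, λ_ℓ`, `u > λᵢ` for all `i`, and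
`δ > 0`, setting `φ̄(x) = ∑ᵢ 1/(x - λᵢ)`, one has `φ̄(u) - φ̄(u+δ) > 0` and
`Tr(((u+δ)I - B)⁻²) / (φ̄(u) - φ̄(u+δ)) + φ̄(u+δ) ≤ 1/δ + φ̄(u)`. -/
theorem upper_barrier_potential
    {ℓ : ℕ} (hℓ : 0 < ℓ) (B : Matrix (Fin ℓ) (Fin ℓ) ℝ) (hB : B.PosSemidef)
    (u δ : ℝ) (hδ : 0 < δ) (hu : ∀ i, hB.1.eigenvalues i < u) :
    0 < (∑ i, (u - hB.1.eigenvalues i)⁻¹) - (∑ i, (u + δ - hB.1.eigenvalues i)⁻¹) ∧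
    ((((u + δ) • (1 : Matrix (Fin ℓ) (Fin ℓ) ℝ) - B)⁻¹ ^ 2).trace) /
        ((∑ i, (u - hB.1.eigenvalues i)⁻¹) - (∑ i, (u + δ - hB.1.eigenvalues i)⁻¹)) +
        (∑ i, (u + δ - hB.1.eigenvalues i)⁻¹) ≤
      1 / δ + (∑ i, (u - hB.1.eigenvalues i)⁻¹) := by
  classical
  set lam := hB.1.eigenvalues with hlam
  have hd : ∀ i, 0 < u + δ - lam i := fun i => by have := hu i; linarith
  have hd0 : ∀ i, 0 < u - lam i := fun i => by have := hu i; linarith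
  -- trace computation
  set U : Matrix (Fin ℓ) (Fin ℓ) ℝ := (hB.1.eigenvectorUnitary : Matrix (Fin ℓ) (Fin ℓ) ℝ)
    with hU
  have hUU : U * star U = 1 := (Matrix.mem_unitaryGroup_iff).mp hB.1.eigenvectorUnitary.2
  have hUU' : star U * U = 1 := (Matrix.mem_unitaryGroup_iff').mp hB.1.eigenvectorUnitary.2
  set d : Fin ℓ → ℝ := fun i => u + δ - lam i with hdd
  have hC : (u + δ) • (1 : Matrix (Fin ℓ) (Fin ℓ) ℝ) - B
      = U * Matrix.diagonal d * star U := by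
    conv_lhs => rw [hB.1.spectral_theorem, Unitary.conjStarAlgAut_apply]
    have h1 : (u + δ) • (1 : Matrix (Fin ℓ) (Fin ℓ) ℝ)
        = U * ((u + δ) • (1 : Matrix (Fin ℓ) (Fin ℓ) ℝ)) * star U := by
      rw [mul_smul_comm, smul_mul_assoc, mul_one, hUU]
    rw [h1, ← sub_mul, ← Matrix.mul_sub]
    congr 1
    congr 1
    have h2 : (RCLike.ofReal ∘ lam : Fin ℓ → ℝ) = lam := by
      funext i; simp [RCLike.ofReal]
    rw [h2]
    ext i j
    by_cases hij : i = j <;>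
      simp [Matrix.diagonal, Matrix.one_apply, hij, d]
  have hinv : ((u + δ) • (1 : Matrix (Fin ℓ) (Fin ℓ) ℝ) - B)⁻¹
      = U * Matrix.diagonal (fun i => (d i)⁻¹) * star U := by
    apply Matrix.inv_eq_right_inv
    rw [hC]
    calc U * Matrix.diagonal d * star U * (U * Matrix.diagonal (fun i => (d i)⁻¹) * star U)
        = U * (Matrix.diagonal d * (star U * U) * Matrix.diagonal (fun i => (d i)⁻¹)) * star U := by
          noncomm_ring
      _ = 1 := by
          rw [hUU', mul_one, Matrix.diagonal_mul_diagonal]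
          have : (fun i => d i * (d i)⁻¹) = fun _ => (1 : ℝ) := by
            funext i; exact mul_inv_cancel₀ (ne_of_gt (hd i))
          rw [this, Matrix.diagonal_one, mul_one, hUU]
  have htr : (((u + δ) • (1 : Matrix (Fin ℓ) (Fin ℓ) ℝ) - B)⁻¹ ^ 2).trace
      = ∑ i, (d i)⁻¹ * (d i)⁻¹ := by
    rw [sq, hinv]
    have : U * Matrix.diagonal (fun i => (d i)⁻¹) * star U *
        (U * Matrix.diagonal (fun i => (d i)⁻¹) * star U)
        = U * (Matrix.diagonal (fun i => (d i)⁻¹) * (star U * U) *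
            Matrix.diagonal (fun i => (d i)⁻¹)) * star U := by noncomm_ring
    rw [this, hUU', mul_one, Matrix.diagonal_mul_diagonal, Matrix.trace_mul_cycle,
      hUU', Matrix.one_mul, Matrix.trace_diagonal]
  -- scalar inequality
  set S1 := ∑ i, (u - lam i)⁻¹ with hS1
  set S2 := ∑ i, (u + δ - lam i)⁻¹ with hS2
  have hterm : ∀ i, (u + δ - lam i)⁻¹ < (u - lam i)⁻¹ := fun i => by
    apply inv_strictAnti₀ (hd0 i); linarith
  have hpos : 0 < S1 - S2 := by
    rw [hS1, hS2, ← Finset.sum_sub_distrib]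
    haveI : Nonempty (Fin ℓ) := Fin.pos_iff_nonempty.mp hℓ
    exact Finset.sum_pos (fun i _ => by have := hterm i; linarith) Finset.univ_nonempty
  refine ⟨hpos, ?_⟩
  rw [htr]
  have hT : ∑ i, (d i)⁻¹ * (d i)⁻¹ ≤ (S1 - S2) / δ := by
    rw [hS1, hS2, ← Finset.sum_sub_distrib, Finset.sum_div]
    apply Finset.sum_le_sum
    intro i _
    have h1 : d i = u + δ - lam i := rfl
    have hd' := hd i
    have hd0' := hd0 i
    rw [h1, div_eq_mul_inv]
    have key : (u - lam i)⁻¹ - (u + δ - lam i)⁻¹ = δ * ((u - lam i)⁻¹ * (u + δ - lam i)⁻¹) := by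
      field_simp
      ring
    rw [key]
    rw [mul_comm δ _, mul_assoc, mul_inv_cancel₀ (ne_of_gt hδ), mul_one]
    apply mul_le_mul_of_nonneg_right _ (le_of_lt (inv_pos.mpr hd'))
    exact le_of_lt (hterm i)
  have hdiv : (∑ i, (d i)⁻¹ * (d i)⁻¹) / (S1 - S2) ≤ 1 / δ := by
    rw [div_le_div_iff₀ hpos hδ, one_mul] at *
    calc (∑ i, (d i)⁻¹ * (d i)⁻¹) * δ ≤ ((S1 - S2) / δ) * δ :=
          mul_le_mul_of_nonneg_right hT (le_of_lt hδ)
      _ = S1 - S2 := div_mul_cancel₀ _ (ne_of_gt hδ)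
  linarith
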